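/- If {N_1} is an operator with 0 ≤ N_1 ≤ I on B_1, σ is a state on B_1 ⊗ B_2 with marginal σ_{B_1} satisfying tr(N_1 σ_{B_1}) ≥ 1 − √δ, and N_2 with 0 ≤ N_2 ≤ I on B_2, then tr((N_1 ⊗ N_2) σ) ≥ tr(N_1 σ_{B_1})·tr(N_2 σ_{B_2}) − 4 δ^{1/4}. -/

import Mathlib

open scoped Kronecker BigOperators ComplexOrder
open Matrix

noncomputable def traceNorm {n : Type*} [Fintype n] [DecidableEq n] (X : Matrix n n ℂ) : ℝ :=
  (((Matrix.posSemidef_conjTranspose_mul_self X).1.eigenvectorUnitary.1 *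
    diagonal (((↑) : ℝ → ℂ) ∘ (√·) ∘ (Matrix.posSemidef_conjTranspose_mul_self X).1.eigenvalues) *
    (star (Matrix.posSemidef_conjTranspose_mul_self X).1.eigenvectorUnitary : Matrix n n ℂ)).trace).re

def IsDensity {n : Type*} [Fintype n] (ρ : Matrix n n ℂ) : Prop :=
  ρ.PosSemidef ∧ ρ.trace = 1

def IsPOVM {ι n : Type*} [Fintype ι] [Fintype n] [DecidableEq n] (M : ι → Matrix n n ℂ) : Prop :=
  (∀ k, (M k).PosSemidef) ∧ ∑ k, M k = 1

noncomputable def ptraceR {a b : Type*} [Fintype b] (ρ : Matrix (a × b) (a × b) ℂ) :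
    Matrix a a ℂ :=
  Matrix.of fun i j => ∑ k, ρ (i, k) (j, k)

noncomputable def ptraceL {a b : Type*} [Fintype a] (ρ : Matrix (a × b) (a × b) ℂ) :
    Matrix b b ℂ :=
  Matrix.of fun i j => ∑ k, ρ (k, i) (k, j)

noncomputable def vN {n : Type*} [Fintype n] [DecidableEq n] (ρ : Matrix n n ℂ) : ℝ :=
  if h : ρ.IsHermitian then -∑ i, h.eigenvalues i * Real.logb 2 (h.eigenvalues i) else 0

noncomputable def mutInfo {a b : Type*} [Fintype a] [DecidableEq a] [Fintype b] [DecidableEq b]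
    (ρ : Matrix (a × b) (a × b) ℂ) : ℝ :=
  vN (ptraceR ρ) + vN (ptraceL ρ) - vN ρ

noncomputable def tensExt {a b r : Type*} (Λ : Matrix a a ℂ → Matrix b b ℂ)
    (X : Matrix (a × r) (a × r) ℂ) : Matrix (b × r) (b × r) ℂ :=
  Matrix.of fun p q => Λ (Matrix.of fun i j => X (i, p.2) (j, q.2)) p.1 q.1

noncomputable def tensExt2 {a b c : Type*} (Λ : Matrix b b ℂ → Matrix c c ℂ)
    (X : Matrix (a × b) (a × b) ℂ) : Matrix (a × c) (a × c) ℂ :=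
  Matrix.of fun p q => Λ (Matrix.of fun k l => X (p.1, k) (q.1, l)) p.2 q.2

noncomputable def diamondNorm {a b : Type*} [Fintype a] [DecidableEq a] [Fintype b] [DecidableEq b]
    (Λ : Matrix a a ℂ → Matrix b b ℂ) : ℝ :=
  ⨆ r : ℕ, ⨆ X : Matrix (a × Fin r) (a × Fin r) ℂ, traceNorm (tensExt Λ X) / traceNorm X

def IsCPTP {a b : Type*} [Fintype a] [DecidableEq a] [Fintype b] [DecidableEq b]
    (Λ : Matrix a a ℂ → Matrix b b ℂ) : Prop :=
  IsLinearMap ℂ Λ ∧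
  (∀ (r : ℕ) (X : Matrix (a × Fin r) (a × Fin r) ℂ), X.PosSemidef → (tensExt Λ X).PosSemidef) ∧
  (∀ X, (Λ X).trace = X.trace)

noncomputable def choi {a b : Type*} [Fintype a] [DecidableEq a]
    (Λ : Matrix a a ℂ → Matrix b b ℂ) : Matrix (a × b) (a × b) ℂ :=
  Matrix.of fun p q => (Fintype.card a : ℂ)⁻¹ * Λ (Matrix.single p.1 q.1 1) p.2 q.2

noncomputable def binEnt (x : ℝ) : ℝ :=
  -x * Real.logb 2 x - (1 - x) * Real.logb 2 (1 - x)

noncomputable def qcChannel {b ι : Type*} [Fintype b] [DecidableEq ι]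
    (N : ι → Matrix b b ℂ) : Matrix b b ℂ → Matrix ι ι ℂ :=
  fun X => Matrix.of fun l l' => if l = l' then (N l * X).trace else 0

noncomputable def extj {n : ℕ} {β : Fin n → Type*} (j : Fin n) (x : β j)
    (g : ∀ i : {i : Fin n // i ≠ j}, β i) : ∀ i, β i :=
  fun i => if h : i = j then cast (congrArg β h).symm x else g ⟨i, h⟩

noncomputable def ptraceTo {n : ℕ} {β : Fin n → Type*} [∀ i, Fintype (β i)]
    [∀ i, DecidableEq (β i)] (j : Fin n)
    (M : Matrix (∀ i, β i) (∀ i, β i) ℂ) : Matrix (β j) (β j) ℂ :=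
  Matrix.of fun x y => ∑ g : ∀ i : {i : Fin n // i ≠ j}, β i, M (extj j x g) (extj j y g)

def extS {n : ℕ} {β : Fin n → Type*} (S : Finset (Fin n))
    (g : ∀ i : {i : Fin n // i ∈ S}, β i) (f : ∀ i : {i : Fin n // i ∉ S}, β i) : ∀ i, β i :=
  fun i => if h : i ∈ S then g ⟨i, h⟩ else f ⟨i, h⟩

noncomputable def margA {a : Type*} {n : ℕ} {β : Fin n → Type*} [∀ i, Fintype (β i)]
    (S : Finset (Fin n)) (ρ : Matrix (a × (∀ i, β i)) (a × (∀ i, β i)) ℂ) :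
    Matrix (a × (∀ i : {i : Fin n // i ∈ S}, β i)) (a × (∀ i : {i : Fin n // i ∈ S}, β i)) ℂ :=
  Matrix.of fun p q =>
    ∑ f : ∀ i : {i : Fin n // i ∉ S}, β i, ρ (p.1, extS S p.2 f) (q.1, extS S q.2 f)

noncomputable def measExt {a b ι : Type*} [Fintype b] [DecidableEq ι]
    (N : ι → Matrix b b ℂ) (L : Matrix (a × b) (a × b) ℂ) : Matrix (a × ι) (a × ι) ℂ :=
  Matrix.of fun p q =>
    if p.2 = q.2 then (N p.2 * Matrix.of (fun k k' => L (p.1, k) (q.1, k'))).trace else 0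

noncomputable def phiVec (d : ℕ) : Fin d × Fin d → ℂ :=
  fun p => if p.1 = p.2 then ((Real.sqrt d : ℝ) : ℂ)⁻¹ else 0

noncomputable def extSj {n : ℕ} {β : Fin n → Type*} (S : Finset (Fin n)) (j : Fin n)
    (g : ∀ i : {i : Fin n // i ∈ S}, β i) (w : β j)
    (f : ∀ i : {i : Fin n // i ∉ S ∧ i ≠ j}, β i) : ∀ i, β i :=
  fun i =>
    if h : i ∈ S then g ⟨i, h⟩
    else if h2 : i = j then cast (congrArg β h2).symm w
    else f ⟨i, ⟨h, h2⟩⟩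

noncomputable def margMeas {a : Type*} {n : ℕ} {β : Fin n → Type*} [∀ i, Fintype (β i)]
    (S : Finset (Fin n)) (j : Fin n) {m : ℕ} (N : Fin m → Matrix (β j) (β j) ℂ)
    (π : Matrix (a × (∀ i, β i)) (a × (∀ i, β i)) ℂ) :
    Matrix (a × ((∀ i : {i : Fin n // i ∈ S}, β i) × Fin m))
           (a × ((∀ i : {i : Fin n // i ∈ S}, β i) × Fin m)) ℂ :=
  Matrix.of fun p q =>
    if p.2.2 = q.2.2 then
      ∑ f : ∀ i : {i : Fin n // i ∉ S ∧ i ≠ j}, β i, ∑ u : β j, ∑ v : β j,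
        N p.2.2 u v * π (p.1, extSj S j p.2.1 v f) (q.1, extSj S j q.2.1 u f)
    else 0


section Stmt14Aux

variable {b₁ b₂ : Type*} [Fintype b₁] [DecidableEq b₁] [Fintype b₂] [DecidableEq b₂]

lemma stmt14_kron_conjT (A : Matrix b₁ b₁ ℂ) (B : Matrix b₂ b₂ ℂ) :
    (A ⊗ₖ B)ᴴ = Aᴴ ⊗ₖ Bᴴ := by
  ext ⟨i, j⟩ ⟨k, l⟩
  simp [conjTranspose_apply, kroneckerMap_apply]

open scoped MatrixOrder in
lemma stmt14_psd_eq_conjTranspose_mul_self {n : Type*} [Fintype n] [DecidableEq n]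
    {A : Matrix n n ℂ} (hA : A.PosSemidef) : ∃ B : Matrix n n ℂ, A = Bᴴ * B := by
  have h0 : (0 : Matrix n n ℂ) ≤ A := Matrix.nonneg_iff_posSemidef.mpr hA
  refine ⟨CFC.sqrt A, ?_⟩
  have hs : IsSelfAdjoint (CFC.sqrt A) := IsSelfAdjoint.of_nonneg (CFC.sqrt_nonneg A)
  rw [show (CFC.sqrt A)ᴴ = CFC.sqrt A from hs, CFC.sqrt_mul_sqrt_self A h0]

lemma stmt14_kron_psd {A : Matrix b₁ b₁ ℂ} {B : Matrix b₂ b₂ ℂ}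
    (hA : A.PosSemidef) (hB : B.PosSemidef) : (A ⊗ₖ B).PosSemidef := by
  obtain ⟨C, rfl⟩ := stmt14_psd_eq_conjTranspose_mul_self hA
  obtain ⟨D, rfl⟩ := stmt14_psd_eq_conjTranspose_mul_self hB
  rw [mul_kronecker_mul, ← stmt14_kron_conjT]
  exact posSemidef_conjTranspose_mul_self _

lemma stmt14_trace_re_nonneg {n : Type*} [Fintype n] [DecidableEq n] {M : Matrix n n ℂ}
    (hM : M.PosSemidef) : 0 ≤ (M.trace).re := by
  have h : ∀ i, 0 ≤ (M i i).re := by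
    intro i
    have := hM.diag_nonneg (i := i)
    rw [Complex.le_def] at this
    simpa using this.1
  simpa [Matrix.trace, Complex.re_sum] using Finset.sum_nonneg fun i _ => h i

lemma stmt14_trace_mul_psd_re_nonneg {n : Type*} [Fintype n] [DecidableEq n]
    {P Q : Matrix n n ℂ} (hP : P.PosSemidef) (hQ : Q.PosSemidef) :
    0 ≤ ((P * Q).trace).re := by
  obtain ⟨B, rfl⟩ := stmt14_psd_eq_conjTranspose_mul_self hP
  rw [Matrix.mul_assoc, Matrix.trace_mul_comm]
  exact stmt14_trace_re_nonneg (by simpa using hQ.mul_mul_conjTranspose_same B)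

lemma stmt14_trace_kron_one (A : Matrix b₁ b₁ ℂ) (σ : Matrix (b₁ × b₂) (b₁ × b₂) ℂ) :
    ((A ⊗ₖ (1 : Matrix b₂ b₂ ℂ)) * σ).trace = (A * ptraceR σ).trace := by
  simp only [Matrix.trace, Matrix.diag, Matrix.mul_apply, kroneckerMap_apply, ptraceR,
    Matrix.of_apply, Matrix.one_apply, Fintype.sum_prod_type, mul_ite, ite_mul, mul_one,
    mul_zero, zero_mul, one_mul, Finset.sum_ite_eq, Finset.sum_ite_eq', Finset.mem_univ,
    if_true, Finset.mul_sum]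
  exact Finset.sum_congr rfl fun i _ => by rw [Finset.sum_comm]

lemma stmt14_trace_one_kron (B : Matrix b₂ b₂ ℂ) (σ : Matrix (b₁ × b₂) (b₁ × b₂) ℂ) :
    (((1 : Matrix b₁ b₁ ℂ) ⊗ₖ B) * σ).trace = (B * ptraceL σ).trace := by
  calc (((1 : Matrix b₁ b₁ ℂ) ⊗ₖ B) * σ).trace
      = ∑ x : b₁, ∑ y : b₂, ∑ x2 : b₂, B y x2 * σ (x, x2) (x, y) := by
        simp only [Matrix.trace, Matrix.diag, Matrix.mul_apply, kroneckerMap_apply,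
          Matrix.one_apply, Fintype.sum_prod_type, ite_mul, one_mul, zero_mul]
        exact Finset.sum_congr rfl fun x _ => Finset.sum_congr rfl fun y _ => by
          rw [Finset.sum_comm]; simp
    _ = (B * ptraceL σ).trace := by
        simp only [Matrix.trace, Matrix.diag, Matrix.mul_apply, ptraceL, Matrix.of_apply,
          Finset.mul_sum]
        rw [Finset.sum_comm]
        exact Finset.sum_congr rfl fun y _ => by rw [Finset.sum_comm]

lemma stmt14_sub_kron (A₁ A₂ : Matrix b₁ b₁ ℂ) (B : Matrix b₂ b₂ ℂ) :
    (A₁ - A₂) ⊗ₖ B = A₁ ⊗ₖ B - A₂ ⊗ₖ B := by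
  ext ⟨i, j⟩ ⟨k, l⟩
  simp [kroneckerMap_apply, Matrix.sub_apply, sub_mul]

lemma stmt14_kron_sub (A : Matrix b₁ b₁ ℂ) (B₁ B₂ : Matrix b₂ b₂ ℂ) :
    A ⊗ₖ (B₁ - B₂) = A ⊗ₖ B₁ - A ⊗ₖ B₂ := by
  ext ⟨i, j⟩ ⟨k, l⟩
  simp [kroneckerMap_apply, Matrix.sub_apply, mul_sub]

lemma stmt14_kron_expand (A : Matrix b₁ b₁ ℂ) (B : Matrix b₂ b₂ ℂ) :
    ((1 - A) ⊗ₖ (1 - B)) =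
      (1 : Matrix b₁ b₁ ℂ) ⊗ₖ (1 : Matrix b₂ b₂ ℂ) - A ⊗ₖ (1 : Matrix b₂ b₂ ℂ)
        - (1 : Matrix b₁ b₁ ℂ) ⊗ₖ B + A ⊗ₖ B := by
  rw [stmt14_sub_kron, stmt14_kron_sub, stmt14_kron_sub]
  abel

end Stmt14Aux

/-- product measurement on a bipartite state versus product of marginals. -/
theorem stmt14 {b₁ b₂ : Type*} [Fintype b₁] [DecidableEq b₁] [Fintype b₂] [DecidableEq b₂]
    (N₁ : Matrix b₁ b₁ ℂ) (N₂ : Matrix b₂ b₂ ℂ)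
    (h₁ : N₁.PosSemidef) (h₁' : (1 - N₁).PosSemidef)
    (h₂ : N₂.PosSemidef) (h₂' : (1 - N₂).PosSemidef)
    (σ : Matrix (b₁ × b₂) (b₁ × b₂) ℂ) (hσ : IsDensity σ)
    (δ : ℝ) (hδ0 : 0 ≤ δ) (hδ1 : δ ≤ 1)
    (h : 1 - Real.sqrt δ ≤ ((N₁ * ptraceR σ).trace).re) :
    ((N₁ * ptraceR σ).trace).re * ((N₂ * ptraceL σ).trace).re - 4 * δ ^ ((1 : ℝ) / 4)
      ≤ (((N₁ ⊗ₖ N₂) * σ).trace).re := by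
  obtain ⟨hσp, hσt⟩ := hσ
  set t1 := ((N₁ * ptraceR σ).trace).re with ht1
  set t2 := ((N₂ * ptraceL σ).trace).re with ht2
  set A := (((N₁ ⊗ₖ N₂) * σ).trace).re with hA
  have e0 : (((1 : Matrix b₁ b₁ ℂ) ⊗ₖ (1 : Matrix b₂ b₂ ℂ)) * σ).trace = 1 := by
    rw [Matrix.one_kronecker_one, Matrix.one_mul, hσt]
  have e1 : ((N₁ ⊗ₖ (1 : Matrix b₂ b₂ ℂ)) * σ).trace = (N₁ * ptraceR σ).trace :=
    stmt14_trace_kron_one N₁ σ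
  have e2 : (((1 : Matrix b₁ b₁ ℂ) ⊗ₖ N₂) * σ).trace = (N₂ * ptraceL σ).trace :=
    stmt14_trace_one_kron N₂ σ
  have F3 : 0 ≤ ((((1 - N₁) ⊗ₖ (1 - N₂)) * σ).trace).re :=
    stmt14_trace_mul_psd_re_nonneg (stmt14_kron_psd h₁' h₂') hσp
  rw [stmt14_kron_expand, Matrix.add_mul, Matrix.sub_mul, Matrix.sub_mul, Matrix.trace_add,
    Matrix.trace_sub, Matrix.trace_sub, e0, e1, e2] at F3
  simp only [Complex.add_re, Complex.sub_re, Complex.one_re] at F3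
  have t2nn : 0 ≤ t2 := by
    have := stmt14_trace_mul_psd_re_nonneg (stmt14_kron_psd Matrix.PosSemidef.one h₂) hσp
    rwa [e2] at this
  have t1le : t1 ≤ 1 := by
    have h0 : 0 ≤ ((((1 - N₁) ⊗ₖ (1 : Matrix b₂ b₂ ℂ)) * σ).trace).re :=
      stmt14_trace_mul_psd_re_nonneg (stmt14_kron_psd h₁' Matrix.PosSemidef.one) hσp
    rw [stmt14_sub_kron, Matrix.sub_mul, Matrix.trace_sub, e0, e1] at h0
    simp only [Complex.sub_re, Complex.one_re] at h0
    linarith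
  have h4nn : 0 ≤ δ ^ ((1 : ℝ)/4) := Real.rpow_nonneg hδ0 _
  have h4le : δ ^ ((1 : ℝ)/4) ≤ 1 := Real.rpow_le_one hδ0 hδ1 (by norm_num)
  have hsq : Real.sqrt δ ≤ δ ^ ((1 : ℝ)/4) := by
    rw [Real.sqrt_eq_rpow]
    calc δ ^ ((1 : ℝ)/2) = (δ ^ ((1 : ℝ)/4)) ^ (2 : ℕ) := by
          rw [← Real.rpow_natCast (δ ^ ((1 : ℝ)/4)) 2, ← Real.rpow_mul hδ0]; norm_num
      _ ≤ δ ^ ((1 : ℝ)/4) := by nlinarith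
  nlinarith [mul_le_of_le_one_left t2nn t1le]
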